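/- The two representations of B_n^α(t) agree: (1/n!) ∑_{k=0}^n (ωt)_k (ω²t)_k (α+t)_{n−k} (α−t+k)_{n−k} / (k!(n−k)!) = (1/n!) ∑_{k=0}^n (α+ωt)_k (α+ω²t)_k (t)_{n−k} (α−t+k)_{n−k} / (k!(n−k)!), for all n ≥ 0, α, t ∈ ℂ. -/

import Mathlib

open scoped BigOperators

/-- The Pochhammer symbol (rising factorial) (a)_n. -/
noncomputable def poch (a : ℂ) (n : ℕ) : ℂ := (ascPochhammer ℂ n).eval a

/-- ω = e^{2πi/3}. -/
noncomputable def ω : ℂ := Complex.exp (2 * Real.pi * Complex.I / 3)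

/-- The polynomials B_n^α(t). -/
noncomputable def Ba (α t : ℂ) (n : ℕ) : ℂ :=
  (1 / (Nat.factorial n : ℂ)) * ∑ k ∈ Finset.range (n + 1),
    poch (ω * t) k * poch (ω ^ 2 * t) k * poch (α + t) (n - k) * poch (α - t + k) (n - k)
      / ((Nat.factorial k : ℂ) * (Nat.factorial (n - k) : ℂ))

set_option maxHeartbeats 1000000

open Finset


lemma poch_zero (a : ℂ) : poch a 0 = 1 := by simp [poch]

lemma poch_one (a : ℂ) : poch a 1 = a := by simp [poch]

lemma poch_succ (a : ℂ) (n : ℕ) : poch a (n + 1) = poch a n * (a + n) := by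
  simp [poch, ascPochhammer_succ_eval]

lemma poch_succ_left (a : ℂ) (n : ℕ) : poch a (n + 1) = a * poch (a + 1) n := by
  simp [poch, ascPochhammer_succ_left, Polynomial.eval_comp]

lemma poch_add (a : ℂ) (m n : ℕ) : poch a (m + n) = poch a m * poch (a + m) n := by
  rw [poch, ← ascPochhammer_mul]
  simp [poch, Polynomial.eval_comp]

lemma poch_vandermonde (x y : ℂ) (n : ℕ) :
    poch (x + y) n = ∑ k ∈ range (n + 1), (n.choose k : ℂ) * poch x k * poch y (n - k) := by
  induction n with
  | zero => simp [poch]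
  | succ n ih =>
    have hsplit : ∀ k ∈ range (n + 1),
        ((n.choose k : ℂ) * poch x k * poch y (n - k)) * (x + y + n)
        = (n.choose k : ℂ) * poch x (k + 1) * poch y (n - k)
          + (n.choose k : ℂ) * poch x k * poch y (n - k + 1) := by
      intro k hk
      have hk' : k ≤ n := by simpa using Nat.lt_succ_iff.mp (mem_range.mp hk)
      have h1 : ((n - k : ℕ) : ℂ) = (n : ℂ) - k := by
        push_cast [hk']; ring
      rw [poch_succ, poch_succ, h1]; ring
    have step2 : ∑ k ∈ range (n + 2), ((n + 1).choose k : ℂ) * poch x k * poch y (n + 1 - k)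
        = (∑ k ∈ range (n + 1), (n.choose k : ℂ) * poch x (k + 1) * poch y (n - k))
          + ∑ k ∈ range (n + 1), (n.choose k : ℂ) * poch x k * poch y (n - k + 1) := by
      rw [Finset.sum_range_succ']
      have e0 : ∀ k, n + 1 - (k + 1) = n - k := fun k => by omega
      have hc : ∀ k, (((n + 1).choose (k + 1) : ℕ) : ℂ) = (n.choose k : ℂ) + (n.choose (k + 1) : ℂ) := by
        intro k; rw [Nat.choose_succ_succ]; push_cast; ring
      have lhs1 : ∑ k ∈ range (n + 1), (((n+1).choose (k+1) : ℕ) : ℂ) * poch x (k + 1) * poch y (n + 1 - (k + 1))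
          = (∑ k ∈ range (n + 1), (n.choose k : ℂ) * poch x (k + 1) * poch y (n - k))
            + ∑ k ∈ range (n + 1), (n.choose (k + 1) : ℂ) * poch x (k + 1) * poch y (n - k) := by
        rw [← Finset.sum_add_distrib]
        refine Finset.sum_congr rfl fun k _ => ?_
        rw [e0, hc]; ring
      rw [lhs1]
      have rhs2 : ∑ k ∈ range (n + 1), (n.choose k : ℂ) * poch x k * poch y (n - k + 1)
          = (∑ k ∈ range (n + 1), (n.choose (k + 1) : ℂ) * poch x (k + 1) * poch y (n - k))
            + ((n+1).choose 0 : ℂ) * poch x 0 * poch y (n + 1 - 0) := by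
        have ext : ∑ k ∈ range (n + 1), (n.choose k : ℂ) * poch x k * poch y (n - k + 1)
            = ∑ k ∈ range (n + 2), (n.choose k : ℂ) * poch x k * poch y (n + 1 - k) := by
          rw [Finset.sum_range_succ (fun k => (n.choose k : ℂ) * poch x k * poch y (n + 1 - k)) (n+1)]
          simp only [Nat.choose_succ_self, Nat.cast_zero, zero_mul, add_zero]
          refine Finset.sum_congr rfl fun k hk => ?_
          have hk' : k ≤ n := Nat.lt_succ_iff.mp (mem_range.mp hk)
          have : n + 1 - k = n - k + 1 := by omega
          rw [this]
        rw [ext, Finset.sum_range_succ']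
        congr 1
        · refine Finset.sum_congr rfl fun k _ => ?_
          rw [e0]
        · simp
      rw [rhs2]; ring
    calc poch (x + y) (n + 1) = poch (x + y) n * (x + y + n) := poch_succ _ _
      _ = ∑ k ∈ range (n + 1), ((n.choose k : ℂ) * poch x k * poch y (n - k)) * (x + y + n) := by
          rw [ih, Finset.sum_mul]
      _ = ∑ k ∈ range (n + 1), ((n.choose k : ℂ) * poch x (k + 1) * poch y (n - k)
            + (n.choose k : ℂ) * poch x k * poch y (n - k + 1)) := Finset.sum_congr rfl hsplit
      _ = _ := by rw [Finset.sum_add_distrib, step2]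

noncomputable def szG (a b c : ℂ) (n : ℕ) : ℕ → ℂ := fun k => match k with
  | 0 => 0
  | j + 1 => if j ≤ n then
      -(((j + 1) * (n + 1).choose (j + 1) : ℕ) *
        (poch (c - a) (j + 1) * poch (c - b) (j + 1) * poch (a + b - c) (n - j) * poch (c + j) (n - j)))
    else 0

noncomputable def szF (a b c : ℂ) (n : ℕ) : ℕ → ℂ := fun k => if k ≤ n then
    (n.choose k : ℂ) *
      (poch (c - a) k * poch (c - b) k * poch (a + b - c) (n - k) * poch (c + k) (n - k))
  else 0

lemma sz_key (a b c : ℂ) (n : ℕ) : ∀ k ∈ range (n + 2),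
    ((n : ℂ) + 1) * (((n + 1).choose k : ℕ) *
      (poch (c - a) k * poch (c - b) k * poch (a + b - c) (n + 1 - k) * poch (c + k) (n + 1 - k)))
    = ((n : ℂ) + 1) * ((a + n) * (b + n)) * szF a b c n k
      + (szG a b c n (k + 1) - szG a b c n k) := by
  intro k hk
  match k with
  | 0 =>
    simp only [szF, szG, if_pos (Nat.zero_le n), poch_zero, Nat.choose_zero_right,
      Nat.sub_zero, Nat.cast_zero, add_zero, one_mul, mul_one, Nat.cast_one, sub_zero]
    norm_num [Nat.choose_one_right]
    rw [poch_succ (a + b - c) n, poch_succ c n, poch_one, poch_one]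
    push_cast
    ring
  | (j + 1) =>
    by_cases hj : j + 1 ≤ n
    · obtain ⟨m, hm⟩ : ∃ m, n = j + 1 + m := ⟨n - (j + 1), by omega⟩
      have e1 : n + 1 - (j + 1) = m + 1 := by omega
      have e2 : n - (j + 1) = m := by omega
      have e3 : n - j = m + 1 := by omega
      simp only [szF, szG, if_pos hj, if_pos (by omega : j ≤ n), e1, e2, e3]
      have hy : ((n.choose (j + 1) : ℕ) : ℂ) * ((n : ℂ) + 1)
          = (((n + 1).choose (j + 1) : ℕ) : ℂ) * ((m : ℂ) + 1) := by
        have h := Nat.choose_mul_succ_eq n (j + 1)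
        rw [e1] at h
        exact_mod_cast congrArg (Nat.cast : ℕ → ℂ) h
      have hz : (((n + 1).choose (j + 2) : ℕ) : ℂ) * ((j : ℂ) + 2)
          = (((n + 1).choose (j + 1) : ℕ) : ℂ) * ((m : ℂ) + 1) := by
        have h := Nat.choose_succ_right_eq (n + 1) (j + 1)
        rw [e1] at h
        have h' := congrArg (Nat.cast : ℕ → ℂ) h
        rw [show j + 1 + 1 = j + 2 from rfl] at h'
        push_cast at h' ⊢
        linear_combination h'
      -- normalize cast of j+1 and reassociate
      have hcast : ((j + 1 : ℕ) : ℂ) = (j : ℂ) + 1 := by push_cast; ring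
      rw [hcast] at *
      rw [show (c + ((j:ℂ) + 1)) = c + (j:ℂ) + 1 from by ring] at *
      rw [poch_succ (a + b - c) m, poch_succ (c + (j:ℂ) + 1) m,
        poch_succ (c - a) (j+1), poch_succ (c - b) (j+1), poch_succ_left (c + (j:ℕ)) m]
      have hn : ((n : ℕ) : ℂ) = (j : ℂ) + 1 + m := by rw [hm]; push_cast; ring
      rw [hn] at hy ⊢
      push_cast at hy hz ⊢
      generalize poch (c - a) (j + 1) = P1 at *
      generalize poch (c - b) (j + 1) = P2 at *
      generalize poch (a + b - c) m = P3 at *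
      generalize poch (c + (j:ℂ) + 1) m = P4 at *
      generalize ((n.choose (j + 1) : ℕ) : ℂ) = y at *
      generalize (((n + 1).choose (j + 1) : ℕ) : ℂ) = x at *
      generalize (((n + 1).choose (j + 2) : ℕ) : ℂ) = z at *
      linear_combination
        (-((a + ((j:ℂ) + 1 + m)) * (b + ((j:ℂ) + 1 + m)) * (P1 * P2 * P3 * P4))) * hy
        + ((P1 * P2 * P3 * P4) * ((c - a + ((j:ℂ) + 1)) * (c - b + ((j:ℂ) + 1)))) * hz
    · have hjn : j = n := by have := mem_range.mp hk; omega
      simp only [szF, szG, if_neg hj, if_pos (by omega : j ≤ n),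
        if_neg (by omega : ¬ j + 1 ≤ n)]
      have e1 : n + 1 - (j + 1) = 0 := by omega
      have e2 : n - j = 0 := by omega
      rw [e1, e2]
      simp only [poch_zero]
      have : ((j : ℕ) : ℂ) = (n : ℂ) := by rw [hjn]
      push_cast
      rw [this]
      ring

lemma saalschutz_df (a b c : ℂ) (n : ℕ) :
    ∑ k ∈ range (n + 1), (n.choose k : ℂ) *
      (poch (c - a) k * poch (c - b) k * poch (a + b - c) (n - k) * poch (c + k) (n - k))
    = poch a n * poch b n := by
  induction n with
  | zero => simp [poch]
  | succ n ih =>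
    have hsum := Finset.sum_congr rfl (sz_key a b c n)
    rw [← Finset.mul_sum, Finset.sum_add_distrib, Finset.sum_range_sub (szG a b c n),
      ← Finset.mul_sum] at hsum
    have hG0 : szG a b c n 0 = 0 := rfl
    have hGtop : szG a b c n (n + 2) = 0 := by
      show (if n + 1 ≤ n then _ else 0) = 0
      exact if_neg (by omega)
    rw [hG0, hGtop, sub_zero, add_zero] at hsum
    have hFsum : ∑ k ∈ range (n + 2), szF a b c n k
        = ∑ k ∈ range (n + 1), (n.choose k : ℂ) *
            (poch (c - a) k * poch (c - b) k * poch (a + b - c) (n - k) * poch (c + k) (n - k)) := by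
      rw [Finset.sum_range_succ]
      have h0 : szF a b c n (n + 1) = 0 := if_neg (by omega)
      rw [h0, add_zero]
      exact Finset.sum_congr rfl fun k hk => by
        simp only [szF, if_pos (Nat.lt_succ_iff.mp (mem_range.mp hk))]
    rw [hFsum, ih] at hsum
    have hne : ((n : ℂ) + 1) ≠ 0 := Nat.cast_add_one_ne_zero n
    rw [poch_succ, poch_succ]
    refine mul_left_cancel₀ hne ?_
    rw [hsum]; ring

lemma euler_df (a b c e : ℂ) (n : ℕ) :
    ∑ k ∈ range (n + 1), (n.choose k : ℂ) *
      (poch a k * poch b k * poch e (n - k) * poch (c + k) (n - k))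
    = ∑ k ∈ range (n + 1), (n.choose k : ℂ) *
      (poch (c - a) k * poch (c - b) k * poch (e + (a + b - c)) (n - k) * poch (c + k) (n - k)) := by
  -- both sides equal T := ∑_j C(n,j) (e)_j (c+(n-j))_j (a)_{n-j}(b)_{n-j}
  have hLHS : ∑ k ∈ range (n + 1), (n.choose k : ℂ) *
        (poch a k * poch b k * poch e (n - k) * poch (c + k) (n - k))
      = ∑ j ∈ range (n + 1), (n.choose j : ℂ) *
        (poch e j * poch (c + ((n - j : ℕ) : ℂ)) j * (poch a (n - j) * poch b (n - j))) := by
    rw [← Finset.sum_range_reflect]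
    refine Finset.sum_congr rfl fun j hj => ?_
    have hjn : j ≤ n := Nat.lt_succ_iff.mp (mem_range.mp hj)
    have h1 : n + 1 - 1 - j = n - j := by omega
    have h2 : n - (n - j) = j := by omega
    have h3 : n.choose (n - j) = n.choose j := Nat.choose_symm hjn
    rw [h1, h2, h3]
    ring
  rw [hLHS]
  -- expand RHS via Vandermonde and swap
  have hexp : ∀ k ∈ range (n + 1), (n.choose k : ℂ) *
        (poch (c - a) k * poch (c - b) k * poch (e + (a + b - c)) (n - k) * poch (c + k) (n - k))
      = ∑ j ∈ range (n - k + 1), (n.choose k : ℂ) * ((n - k).choose j : ℂ) *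
          (poch e j * poch (a + b - c) (n - k - j) *
            (poch (c - a) k * poch (c - b) k * poch (c + k) (n - k))) := by
    intro k hk
    rw [poch_vandermonde e (a + b - c) (n - k)]
    simp only [Finset.mul_sum, Finset.sum_mul]
    refine Finset.sum_congr rfl fun j hj => ?_
    ring
  rw [Finset.sum_congr rfl hexp]
  rw [Finset.sum_comm' (s := range (n + 1)) (t := fun k => range (n - k + 1))
    (t' := range (n + 1)) (s' := fun j => range (n - j + 1))
    (fun k j => by simp only [mem_range]; omega)]
  refine Finset.sum_congr rfl fun j hj => ?_
  have hjn : j ≤ n := Nat.lt_succ_iff.mp (mem_range.mp hj)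
  -- inner sum is Saalschütz at n - j
  have hinner : ∀ k ∈ range (n - j + 1),
      (n.choose k : ℂ) * ((n - k).choose j : ℂ) *
        (poch e j * poch (a + b - c) (n - k - j) *
          (poch (c - a) k * poch (c - b) k * poch (c + k) (n - k)))
      = ((n.choose j : ℂ) * (poch e j * poch (c + ((n - j : ℕ) : ℂ)) j)) *
        (((n - j).choose k : ℂ) *
          (poch (c - a) k * poch (c - b) k * poch (a + b - c) (n - j - k) * poch (c + k) (n - j - k))) := by
    intro k hk
    have hkj : k ≤ n - j := Nat.lt_succ_iff.mp (mem_range.mp hk)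
    have hkjn : k + j ≤ n := by omega
    -- binomial identity
    have hbin : (n.choose k) * ((n - k).choose j) = (n.choose j) * ((n - j).choose k) := by
      have h1 := Nat.choose_mul (n := n) (show k ≤ k + j from Nat.le_add_right _ _)
      have h2 := Nat.choose_mul (n := n) (show j ≤ k + j from Nat.le_add_left _ _)
      have h3 : (k + j).choose k = (k + j).choose j := by
        rw [← Nat.choose_symm (Nat.le_add_left _ _)]
        congr 1; omega
      have e4 : k + j - k = j := by omega
      have e5 : k + j - j = k := by omega
      rw [e4] at h1; rw [e5] at h2
      rw [h3] at h1
      omega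
    have e6 : n - k - j = n - j - k := by omega
    have e7 : n - k = (n - j - k) + j := by omega
    have hcast : ((c + (k : ℂ)) + ((n - j - k : ℕ) : ℂ)) = c + ((n - j : ℕ) : ℂ) := by
      have : ((n - j - k : ℕ) : ℂ) = ((n - j : ℕ) : ℂ) - (k : ℂ) := by
        have : ((n - j - k) + k : ℕ) = n - j := by omega
        calc ((n - j - k : ℕ) : ℂ) = (((n - j - k) + k : ℕ) : ℂ) - k := by push_cast; ring
          _ = ((n - j : ℕ) : ℂ) - k := by rw [this]
      rw [this]; ring
    have hsplit : poch (c + (k : ℂ)) (n - k)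
        = poch (c + (k : ℂ)) (n - j - k) * poch (c + ((n - j : ℕ) : ℂ)) j := by
      rw [← hcast, ← poch_add]
      exact congrArg _ (by omega)
    rw [e6, hsplit]
    have hbc : ((n.choose k : ℕ) : ℂ) * (((n - k).choose j : ℕ) : ℂ)
        = ((n.choose j : ℕ) : ℂ) * (((n - j).choose k : ℕ) : ℂ) := by
      exact_mod_cast congrArg (Nat.cast : ℕ → ℂ) hbin
    linear_combination (poch e j * poch (a + b - c) (n - j - k) *
      (poch (c - a) k * poch (c - b) k * poch (c + (k:ℂ)) (n - j - k) *
        poch (c + ((n - j : ℕ) : ℂ)) j)) * hbc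
  rw [Finset.sum_congr rfl hinner, ← Finset.mul_sum, saalschutz_df a b c (n - j)]
  ring

lemma omega_cube : ω ^ 3 = 1 := by
  rw [ω, ← Complex.exp_nat_mul]
  rw [show ((3 : ℕ) : ℂ) * (2 * Real.pi * Complex.I / 3) = 2 * Real.pi * Complex.I by push_cast; ring]
  exact Complex.exp_two_pi_mul_I

lemma omega_ne_one : ω ≠ 1 := by
  intro h
  have h1 : ω = Complex.exp ((2 * Real.pi / 3 : ℝ) * Complex.I) := by
    rw [ω]; congr 1; push_cast; ring
  have h2 : (ω).re = Real.cos (2 * Real.pi / 3) := by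
    rw [h1, Complex.exp_ofReal_mul_I_re]
  have h3 : Real.cos (2 * Real.pi / 3) = -(1/2) := by
    rw [show (2 * Real.pi / 3 : ℝ) = Real.pi - Real.pi / 3 by ring, Real.cos_pi_sub,
      Real.cos_pi_div_three]
  rw [h, h3] at h2
  norm_num at h2

lemma omega_sum : ω ^ 2 + ω + 1 = 0 := by
  have h : (ω - 1) * (ω ^ 2 + ω + 1) = 0 := by linear_combination omega_cube
  rcases mul_eq_zero.mp h with h' | h'
  · exact absurd (sub_eq_zero.mp h') omega_ne_one
  · exact h'

lemma sum_div_to_df (f : ℕ → ℂ) (n : ℕ) :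
    ∑ k ∈ range (n + 1), f k / ((Nat.factorial k : ℂ) * (Nat.factorial (n - k) : ℂ))
    = (1 / (Nat.factorial n : ℂ)) * ∑ k ∈ range (n + 1), (n.choose k : ℂ) * f k := by
  rw [Finset.mul_sum]
  refine Finset.sum_congr rfl fun k hk => ?_
  have hkn : k ≤ n := Nat.lt_succ_iff.mp (mem_range.mp hk)
  have hch : ((n.choose k : ℕ) : ℂ) * (Nat.factorial k : ℂ) * (Nat.factorial (n - k) : ℂ)
      = (Nat.factorial n : ℂ) := by
    exact_mod_cast congrArg (Nat.cast : ℕ → ℂ) (Nat.choose_mul_factorial_mul_factorial hkn)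
  have hk1 : (Nat.factorial k : ℂ) ≠ 0 := Nat.cast_ne_zero.mpr (Nat.factorial_ne_zero k)
  have hk2 : (Nat.factorial (n - k) : ℂ) ≠ 0 := Nat.cast_ne_zero.mpr (Nat.factorial_ne_zero (n - k))
  have hk3 : (Nat.factorial n : ℂ) ≠ 0 := Nat.cast_ne_zero.mpr (Nat.factorial_ne_zero n)
  field_simp
  linear_combination (- f k) * hch

theorem Ba_two_representations (n : ℕ) (α t : ℂ) :
    (1 / (Nat.factorial n : ℂ)) * ∑ k ∈ Finset.range (n + 1),
      poch (ω * t) k * poch (ω ^ 2 * t) k * poch (α + t) (n - k) * poch (α - t + k) (n - k)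
        / ((Nat.factorial k : ℂ) * (Nat.factorial (n - k) : ℂ))
    = (1 / (Nat.factorial n : ℂ)) * ∑ k ∈ Finset.range (n + 1),
      poch (α + ω * t) k * poch (α + ω ^ 2 * t) k * poch t (n - k) * poch (α - t + k) (n - k)
        / ((Nat.factorial k : ℂ) * (Nat.factorial (n - k) : ℂ)) := by
  have hω := omega_sum
  have hL : ∑ k ∈ Finset.range (n + 1),
      poch (ω * t) k * poch (ω ^ 2 * t) k * poch (α + t) (n - k) * poch (α - t + k) (n - k)
        / ((Nat.factorial k : ℂ) * (Nat.factorial (n - k) : ℂ))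
      = (1 / (Nat.factorial n : ℂ)) * ∑ k ∈ range (n + 1), (n.choose k : ℂ) *
          (poch (ω * t) k * poch (ω ^ 2 * t) k * poch (α + t) (n - k) * poch ((α - t) + k) (n - k)) :=
    sum_div_to_df _ n
  have hR : ∑ k ∈ Finset.range (n + 1),
      poch (α + ω * t) k * poch (α + ω ^ 2 * t) k * poch t (n - k) * poch (α - t + k) (n - k)
        / ((Nat.factorial k : ℂ) * (Nat.factorial (n - k) : ℂ))
      = (1 / (Nat.factorial n : ℂ)) * ∑ k ∈ range (n + 1), (n.choose k : ℂ) *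
          (poch (α + ω * t) k * poch (α + ω ^ 2 * t) k * poch t (n - k) * poch ((α - t) + k) (n - k)) :=
    sum_div_to_df _ n
  rw [hL, hR]
  have key := euler_df (ω * t) (ω ^ 2 * t) (α - t) (α + t) n
  rw [key]
  have h1 : α - t - ω * t = α + ω ^ 2 * t := by linear_combination (-t) * hω
  have h2 : α - t - ω ^ 2 * t = α + ω * t := by linear_combination (-t) * hω
  have h3 : α + t + (ω * t + ω ^ 2 * t - (α - t)) = t := by linear_combination t * hω
  have hterm : ∀ k ∈ range (n + 1), (n.choose k : ℂ) *
      (poch (α - t - ω * t) k * poch (α - t - ω ^ 2 * t) k *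
        poch (α + t + (ω * t + ω ^ 2 * t - (α - t))) (n - k) * poch ((α - t) + k) (n - k))
      = (n.choose k : ℂ) *
      (poch (α + ω * t) k * poch (α + ω ^ 2 * t) k * poch t (n - k) * poch ((α - t) + k) (n - k)) := by
    intro k hk
    rw [h1, h2, h3]
    ring
  rw [Finset.sum_congr rfl hterm]
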